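/- arXiv:1705.10856 — 2 statements merged into one kernel-verified Lean document; each statement's English description precedes it below -/
import Mathlib

section
/- Let n ≥ 1, Q = 2n+2, and let M be a constant 2n×2n real symmetric positive definite matrix which is symplectic, i.e. M⁻¹ = Jᵗ M J. Then for every point (x,t) ∈ ℝ^{2n+1} one has the two identities ((Q+2)/4)·⟨M ∇_H φ_M(x,t), ∇_H φ_M(x,t)⟩ = φ_M(x,t) · (𝓛_M φ_M)(x,t) = 4(Q+2)·⟨M⁻¹x, x⟩·φ_M(x,t), where φ_M(x,t) = ⟨M⁻¹x,x⟩² + t². -/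
open MeasureTheory Set Matrix

noncomputable section

/-- Points of the Heisenberg group `ℍⁿ = ℝ^{2n} × ℝ`, written `z = (x, t)`. -/
abbrev Hpt (n : ℕ) := (Fin (2 * n) → ℝ) × ℝ

/-- The standard symplectic matrix `J = (0, -Iₙ; Iₙ, 0)`. -/
def Jmat (n : ℕ) : Matrix (Fin (2 * n)) (Fin (2 * n)) ℝ :=
  Matrix.of fun i j =>
    if (i : ℕ) + n = (j : ℕ) then (-1 : ℝ) else if (j : ℕ) + n = (i : ℕ) then 1 else 0

/-- The Heisenberg group law `(x,t) ∘ (ξ,τ) = (x + ξ, t + τ + 2⟨Jx, ξ⟩)`. -/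
def hmul {n : ℕ} (z w : Hpt n) : Hpt n :=
  (z.1 + w.1, z.2 + w.2 + 2 * ((Jmat n).mulVec z.1 ⬝ᵥ w.1))

/-- The direction vector of the horizontal vector field `Xᵢ = ∂_{xᵢ} + 2(Jx)ᵢ ∂_t`
at a point with horizontal coordinates `x`. -/
def Xvec {n : ℕ} (x : Fin (2 * n) → ℝ) (i : Fin (2 * n)) : Hpt n :=
  (Pi.single i 1, 2 * (Jmat n).mulVec x i)

/-- The horizontal derivative `Xᵢ ψ`. -/
def Xd {n : ℕ} (i : Fin (2 * n)) (ψ : Hpt n → ℝ) (z : Hpt n) : ℝ :=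
  fderiv ℝ ψ z (Xvec z.1 i)

/-- The horizontal gradient `∇_H ψ = (X₁ψ, …, X_{2n}ψ)`. -/
def gradH {n : ℕ} (ψ : Hpt n → ℝ) (z : Hpt n) : Fin (2 * n) → ℝ := fun i => Xd i ψ z

/-- The operator `𝓛_A ψ = Σ_{i,j} a_{ij}(z) XᵢXⱼψ` for a (variable) coefficient matrix `A`. -/
def Lop {n : ℕ} (A : Hpt n → Matrix (Fin (2 * n)) (Fin (2 * n)) ℝ) (ψ : Hpt n → ℝ)
    (z : Hpt n) : ℝ :=
  ∑ i, ∑ j, A z i j * Xd i (Xd j ψ) z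

/-- `φ_M(x,t) = ⟨M⁻¹x, x⟩² + t²`. -/
def phiM {n : ℕ} (M : Matrix (Fin (2 * n)) (Fin (2 * n)) ℝ) (z : Hpt n) : ℝ :=
  (M⁻¹.mulVec z.1 ⬝ᵥ z.1) ^ 2 + z.2 ^ 2

/-- A matrix `M` is symplectic if `M⁻¹ = Jᵗ M J`. -/
def IsSymplecticMat {n : ℕ} (M : Matrix (Fin (2 * n)) (Fin (2 * n)) ℝ) : Prop :=
  M⁻¹ = (Jmat n)ᵀ * M * Jmat n

-- auxiliary CLMs
def cCLM (n : ℕ) (j : Fin (2 * n)) : Hpt n →L[ℝ] ℝ :=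
  (ContinuousLinearMap.proj j).comp (ContinuousLinearMap.fst ℝ (Fin (2 * n) → ℝ) ℝ)

def mvCLM {n : ℕ} (N : Matrix (Fin (2 * n)) (Fin (2 * n)) ℝ) (j : Fin (2 * n)) :
    Hpt n →L[ℝ] ℝ :=
  (ContinuousLinearMap.proj j).comp
    ((LinearMap.toContinuousLinearMap N.mulVecLin).comp
      (ContinuousLinearMap.fst ℝ (Fin (2 * n) → ℝ) ℝ))

@[simp] lemma cCLM_apply {n : ℕ} (j : Fin (2 * n)) (v : Hpt n) : cCLM n j v = v.1 j := rfl
@[simp] lemma mvCLM_apply {n : ℕ} (N : Matrix (Fin (2 * n)) (Fin (2 * n)) ℝ)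
    (j : Fin (2 * n)) (v : Hpt n) : mvCLM N j v = N.mulVec v.1 j := rfl

def DuCLM {n : ℕ} (N : Matrix (Fin (2 * n)) (Fin (2 * n)) ℝ) (z : Hpt n) :
    Hpt n →L[ℝ] ℝ :=
  ∑ j, ((N.mulVec z.1 j) • cCLM n j + (z.1 j) • mvCLM N j)

lemma hasFDerivAt_u {n : ℕ} (N : Matrix (Fin (2 * n)) (Fin (2 * n)) ℝ) (z : Hpt n) :
    HasFDerivAt (fun w : Hpt n => N.mulVec w.1 ⬝ᵥ w.1) (DuCLM N z) z := by
  have h : (fun w : Hpt n => N.mulVec w.1 ⬝ᵥ w.1)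
      = fun w : Hpt n => ∑ j, (mvCLM N j w) * (cCLM n j w) := by
    funext w; simp [dotProduct]
  rw [h]
  exact HasFDerivAt.fun_sum fun j _ => ((mvCLM N j).hasFDerivAt).mul ((cCLM n j).hasFDerivAt)

lemma DuCLM_apply {n : ℕ} (N : Matrix (Fin (2 * n)) (Fin (2 * n)) ℝ) (z v : Hpt n) :
    DuCLM N z v = ∑ j, (N.mulVec z.1 j * v.1 j + z.1 j * N.mulVec v.1 j) := by
  simp [DuCLM]

lemma DuCLM_apply_Xvec {n : ℕ} (N : Matrix (Fin (2 * n)) (Fin (2 * n)) ℝ)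
    (hN : N.IsSymm) (z : Hpt n) (i : Fin (2 * n)) :
    DuCLM N z (Xvec z.1 i) = 2 * N.mulVec z.1 i := by
  rw [DuCLM_apply]
  simp only [Xvec]
  have h1 : ∀ j, N.mulVec (Pi.single i 1 : Fin (2*n) → ℝ) j = N j i := by
    intro j
    simp [Matrix.mulVec, dotProduct, Pi.single_apply]
  have h2 : ∀ j, N j i = N i j := fun j => hN.apply i j
  simp only [h1]
  rw [Finset.sum_add_distrib]
  have : (∑ j, N.mulVec z.1 j * (Pi.single i 1 : Fin (2*n) → ℝ) j) = N.mulVec z.1 i := by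
    simp [Pi.single_apply, mul_comm]
  rw [this]
  have : (∑ j, z.1 j * N j i) = N.mulVec z.1 i := by
    simp only [Matrix.mulVec, dotProduct]
    exact Finset.sum_congr rfl fun j _ => by rw [h2 j, mul_comm]
  rw [this]; ring

def DphiCLM {n : ℕ} (M : Matrix (Fin (2 * n)) (Fin (2 * n)) ℝ) (z : Hpt n) :
    Hpt n →L[ℝ] ℝ :=
  ((M⁻¹.mulVec z.1 ⬝ᵥ z.1) • DuCLM M⁻¹ z + (M⁻¹.mulVec z.1 ⬝ᵥ z.1) • DuCLM M⁻¹ z)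
    + (z.2 • (ContinuousLinearMap.snd ℝ (Fin (2 * n) → ℝ) ℝ)
        + z.2 • (ContinuousLinearMap.snd ℝ (Fin (2 * n) → ℝ) ℝ))

lemma hasFDerivAt_phi {n : ℕ} (M : Matrix (Fin (2 * n)) (Fin (2 * n)) ℝ) (z : Hpt n) :
    HasFDerivAt (phiM M) (DphiCLM M z) z := by
  have h1 := (hasFDerivAt_u M⁻¹ z).mul (hasFDerivAt_u M⁻¹ z)
  have h2 := ((ContinuousLinearMap.snd ℝ (Fin (2 * n) → ℝ) ℝ).hasFDerivAt (x := z)).mul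
    ((ContinuousLinearMap.snd ℝ (Fin (2 * n) → ℝ) ℝ).hasFDerivAt (x := z))
  have h := h1.add h2
  have heq : phiM M = fun w : Hpt n =>
      (M⁻¹.mulVec w.1 ⬝ᵥ w.1) * (M⁻¹.mulVec w.1 ⬝ᵥ w.1) + w.2 * w.2 := by
    funext w; simp [phiM]; ring
  rw [heq]
  exact h


lemma DphiCLM_apply_Xvec {n : ℕ} (M : Matrix (Fin (2 * n)) (Fin (2 * n)) ℝ)
    (hN : (M⁻¹).IsSymm) (z : Hpt n) (j : Fin (2 * n)) :
    DphiCLM M z (Xvec z.1 j) =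
      4 * (M⁻¹.mulVec z.1 ⬝ᵥ z.1) * (M⁻¹.mulVec z.1 j)
        + 4 * z.2 * ((Jmat n).mulVec z.1 j) := by
  simp only [DphiCLM, ContinuousLinearMap.add_apply, ContinuousLinearMap.smul_apply,
    ContinuousLinearMap.coe_snd', smul_eq_mul]
  rw [DuCLM_apply_Xvec M⁻¹ hN z j]
  simp only [Xvec]
  ring

lemma Xd_phi {n : ℕ} (M : Matrix (Fin (2 * n)) (Fin (2 * n)) ℝ)
    (hN : (M⁻¹).IsSymm) (j : Fin (2 * n)) :
    Xd j (phiM M) = fun z : Hpt n =>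
      4 * (M⁻¹.mulVec z.1 ⬝ᵥ z.1) * (M⁻¹.mulVec z.1 j)
        + 4 * z.2 * ((Jmat n).mulVec z.1 j) := by
  funext z
  rw [Xd, (hasFDerivAt_phi M z).fderiv, DphiCLM_apply_Xvec M hN z j]

lemma XdXd_phi {n : ℕ} (M : Matrix (Fin (2 * n)) (Fin (2 * n)) ℝ)
    (hN : (M⁻¹).IsSymm) (i j : Fin (2 * n)) (z : Hpt n) :
    Xd i (Xd j (phiM M)) z =
      8 * (M⁻¹.mulVec z.1 i) * (M⁻¹.mulVec z.1 j)
        + 4 * (M⁻¹.mulVec z.1 ⬝ᵥ z.1) * (M⁻¹ j i)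
        + 8 * ((Jmat n).mulVec z.1 i) * ((Jmat n).mulVec z.1 j)
        + 4 * z.2 * (Jmat n j i) := by
  rw [Xd_phi M hN j]
  have h1 : HasFDerivAt (fun w : Hpt n =>
        4 * (M⁻¹.mulVec w.1 ⬝ᵥ w.1) * (M⁻¹.mulVec w.1 j)
          + 4 * w.2 * ((Jmat n).mulVec w.1 j))
      ((((4 * (M⁻¹.mulVec z.1 ⬝ᵥ z.1)) • (mvCLM M⁻¹ j)
          + (M⁻¹.mulVec z.1 j) • ((4:ℝ) • DuCLM M⁻¹ z)))
        + ((4 * z.2) • (mvCLM (Jmat n) j)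
          + ((Jmat n).mulVec z.1 j) • ((4:ℝ) • (ContinuousLinearMap.snd ℝ (Fin (2 * n) → ℝ) ℝ)))) z := by
    have a1 := ((hasFDerivAt_u M⁻¹ z).const_mul (4:ℝ)).mul ((mvCLM M⁻¹ j).hasFDerivAt (x := z))
    have a2 := (((ContinuousLinearMap.snd ℝ (Fin (2 * n) → ℝ) ℝ).hasFDerivAt (x := z)).const_mul
      (4:ℝ)).mul ((mvCLM (Jmat n) j).hasFDerivAt (x := z))
    exact a1.add a2
  rw [Xd, h1.fderiv]
  simp only [ContinuousLinearMap.add_apply, ContinuousLinearMap.smul_apply,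
    ContinuousLinearMap.coe_snd', mvCLM_apply, smul_eq_mul]
  rw [DuCLM_apply_Xvec M⁻¹ hN z i]
  have h2 : ∀ (N : Matrix (Fin (2 * n)) (Fin (2 * n)) ℝ),
      N.mulVec (Xvec z.1 i).1 j = N j i := by
    intro N
    simp [Xvec, Matrix.mulVec, dotProduct, Pi.single_apply]
  rw [h2, h2]
  have h3 : (Xvec z.1 i).2 = 2 * (Jmat n).mulVec z.1 i := rfl
  rw [h3]
  ring


lemma mulVec_dot {n : ℕ} (A : Matrix (Fin (2 * n)) (Fin (2 * n)) ℝ)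
    (v w : Fin (2 * n) → ℝ) : A.mulVec v ⬝ᵥ w = v ⬝ᵥ Aᵀ.mulVec w := by
  rw [dotProduct_comm, Matrix.dotProduct_mulVec, dotProduct_comm,
    Matrix.mulVec_transpose]

lemma Jmat_transpose (n : ℕ) : (Jmat n)ᵀ = -(Jmat n) := by
  ext i j
  have hi := i.isLt
  simp only [Matrix.transpose_apply, Matrix.neg_apply, Jmat, Matrix.of_apply]
  split_ifs with h1 h2 h2 <;> simp_all <;> omega

lemma dsum_eq {n : ℕ} (A : Matrix (Fin (2 * n)) (Fin (2 * n)) ℝ)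
    (v w : Fin (2 * n) → ℝ) :
    ∑ i, ∑ j, A i j * (v i * w j) = A.mulVec w ⬝ᵥ v := by
  simp only [Matrix.mulVec, dotProduct, Finset.sum_mul]
  exact Finset.sum_congr rfl fun i _ => Finset.sum_congr rfl fun j _ => by ring

lemma tsum_eq {n : ℕ} (A B : Matrix (Fin (2 * n)) (Fin (2 * n)) ℝ) :
    ∑ i, ∑ j, A i j * B j i = (A * B).trace := by
  simp [Matrix.trace, Matrix.mul_apply, Matrix.diag]



/-- Lemma 3.2, first part. For a constant symmetric positive definite
symplectic matrix `M`, with `Q = 2n+2`, one has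
`((Q+2)/4)·⟨M ∇_H φ_M, ∇_H φ_M⟩ = φ_M · 𝓛_M φ_M = 4(Q+2)·⟨M⁻¹x,x⟩·φ_M` everywhere. -/
theorem stmt0 (n : ℕ) (hn : 1 ≤ n) (Q : ℝ) (hQ : Q = 2 * n + 2)
    (M : Matrix (Fin (2 * n)) (Fin (2 * n)) ℝ)
    (hsymm : M.IsSymm) (hpos : M.PosDef) (hsympl : IsSymplecticMat M) :
    ∀ z : Hpt n,
      (Q + 2) / 4 * (M.mulVec (gradH (phiM M) z) ⬝ᵥ gradH (phiM M) z) =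
          phiM M z * Lop (fun _ => M) (phiM M) z ∧
      phiM M z * Lop (fun _ => M) (phiM M) z =
          4 * (Q + 2) * (M⁻¹.mulVec z.1 ⬝ᵥ z.1) * phiM M z := by
  intro z
  have hN : (M⁻¹).IsSymm := by
    rw [Matrix.IsSymm, Matrix.transpose_nonsing_inv, hsymm.eq]
  have hdet : IsUnit M.det := hpos.det_pos.ne'.isUnit
  have hMN : M * M⁻¹ = 1 := Matrix.mul_nonsing_inv M hdet
  have hMa : M.mulVec (M⁻¹.mulVec z.1) = z.1 := by
    rw [Matrix.mulVec_mulVec, hMN, Matrix.one_mulVec]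
  have hdotJ : z.1 ⬝ᵥ (Jmat n).mulVec z.1 = 0 := by
    have h := mulVec_dot (Jmat n) z.1 z.1
    rw [Jmat_transpose, Matrix.neg_mulVec, dotProduct_neg] at h
    have h2 : (Jmat n).mulVec z.1 ⬝ᵥ z.1 = z.1 ⬝ᵥ (Jmat n).mulVec z.1 :=
      dotProduct_comm _ _
    linarith
  have hdot1 : M.mulVec (M⁻¹.mulVec z.1) ⬝ᵥ (M⁻¹.mulVec z.1)
      = M⁻¹.mulVec z.1 ⬝ᵥ z.1 := by
    rw [hMa, dotProduct_comm]
  have hdot2 : M.mulVec (M⁻¹.mulVec z.1) ⬝ᵥ ((Jmat n).mulVec z.1) = 0 := by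
    rw [hMa]; exact hdotJ
  have hdot3 : M.mulVec ((Jmat n).mulVec z.1) ⬝ᵥ (M⁻¹.mulVec z.1) = 0 := by
    rw [mulVec_dot, hsymm.eq, hMa, dotProduct_comm]
    exact hdotJ
  have hdot4 : M.mulVec ((Jmat n).mulVec z.1) ⬝ᵥ ((Jmat n).mulVec z.1)
      = M⁻¹.mulVec z.1 ⬝ᵥ z.1 := by
    rw [Matrix.mulVec_mulVec, mulVec_dot, Matrix.mulVec_mulVec]
    have hMJ : (M * Jmat n)ᵀ * Jmat n = M⁻¹ := by
      rw [Matrix.transpose_mul, hsymm.eq, Matrix.mul_assoc, ← Matrix.mul_assoc, ← hsympl]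
    rw [hMJ, dotProduct_comm]
  have hgrad : gradH (phiM M) z =
      (4 * (M⁻¹.mulVec z.1 ⬝ᵥ z.1)) • (M⁻¹.mulVec z.1)
        + (4 * z.2) • ((Jmat n).mulVec z.1) := by
    funext j
    have h := congrFun (Xd_phi M hN j) z
    show Xd j (phiM M) z = _
    rw [h]
    simp only [Pi.add_apply, Pi.smul_apply, smul_eq_mul]
  have hgd : M.mulVec (gradH (phiM M) z) ⬝ᵥ gradH (phiM M) z
      = 16 * (M⁻¹.mulVec z.1 ⬝ᵥ z.1) * phiM M z := by
    rw [hgrad, Matrix.mulVec_add, Matrix.mulVec_smul, Matrix.mulVec_smul]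
    simp only [add_dotProduct, dotProduct_add, smul_dotProduct,
      dotProduct_smul, smul_eq_mul]
    rw [hdot1, hdot2, hdot3, hdot4, phiM]
    ring
  have htr1 : (M * M⁻¹).trace = (2 * n : ℝ) := by
    rw [hMN, Matrix.trace_one]
    simp
  have htrJ : (M * Jmat n).trace = 0 := by
    have h1 : (M * Jmat n).trace = ((M * Jmat n)ᵀ).trace := (Matrix.trace_transpose _).symm
    rw [Matrix.transpose_mul, Jmat_transpose, hsymm.eq, Matrix.neg_mul, Matrix.trace_neg,
      Matrix.trace_mul_comm] at h1
    have h2 : (M * Jmat n).trace = (Jmat n * M).trace := Matrix.trace_mul_comm _ _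
    linarith
  have hLop : Lop (fun _ => M) (phiM M) z
      = (16 + 8 * (n : ℝ)) * (M⁻¹.mulVec z.1 ⬝ᵥ z.1) := by
    rw [Lop]
    have hterm : ∀ i j, M i j * Xd i (Xd j (phiM M)) z
        = 8 * (M i j * ((M⁻¹.mulVec z.1) i * (M⁻¹.mulVec z.1) j))
          + 4 * (M⁻¹.mulVec z.1 ⬝ᵥ z.1) * (M i j * M⁻¹ j i)
          + 8 * (M i j * ((Jmat n).mulVec z.1 i * (Jmat n).mulVec z.1 j))
          + 4 * z.2 * (M i j * Jmat n j i) := by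
      intro i j
      rw [XdXd_phi M hN]
      ring
    simp only [hterm, Finset.sum_add_distrib, ← Finset.mul_sum]
    rw [dsum_eq, dsum_eq, tsum_eq, tsum_eq, htr1, htrJ, hdot1, hdot4]
    ring
  constructor
  · rw [hgd, hLop, hQ]
    ring
  · rw [hLop, hQ, phiM]
    ring

end
end

section
/- Let n ≥ 1, Q = 2n+2, and let M be a constant 2n×2n real symmetric positive definite matrix. If the identity ((Q+2)/4)·⟨M ∇_H φ_M(x,t), ∇_H φ_M(x,t)⟩ = φ_M(x,t) · (𝓛_M φ_M)(x,t) holds for all (x,t) ∈ ℝ^{2n+1}, where φ_M(x,t) = ⟨M⁻¹x,x⟩² + t², then M is symplectic, i.e. M⁻¹ = Jᵗ M J. -/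
open MeasureTheory Set Matrix

noncomputable section

namespace Stmt1Aux
variable {n : ℕ}

/-- coordinate CLM -/
def ℓc (k : Fin (2*n)) : Hpt n →L[ℝ] ℝ :=
  (ContinuousLinearMap.proj k).comp (ContinuousLinearMap.fst ℝ (Fin (2*n) → ℝ) ℝ)

def τc : Hpt n →L[ℝ] ℝ := ContinuousLinearMap.snd ℝ (Fin (2*n) → ℝ) ℝ

@[simp] lemma ℓc_apply (k : Fin (2*n)) (v : Hpt n) : ℓc k v = v.1 k := rfl
@[simp] lemma τc_apply (v : Hpt n) : τc v = v.2 := rfl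

lemma hasFD_coord (k : Fin (2*n)) (z : Hpt n) :
    HasFDerivAt (fun w : Hpt n => w.1 k) (ℓc k) z := (ℓc k).hasFDerivAt

lemma hasFD_snd (z : Hpt n) : HasFDerivAt (fun w : Hpt n => w.2) (τc : Hpt n →L[ℝ] ℝ) z :=
  τc.hasFDerivAt

def dpc (c : Fin (2*n) → ℝ) : Hpt n →L[ℝ] ℝ := ∑ k, c k • ℓc k

@[simp] lemma dpc_apply (c : Fin (2*n) → ℝ) (v : Hpt n) : dpc c v = c ⬝ᵥ v.1 := by
  simp [dpc, dotProduct, ContinuousLinearMap.sum_apply]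

lemma hasFD_lin (B : Matrix (Fin (2*n)) (Fin (2*n)) ℝ) (j : Fin (2*n)) (z : Hpt n) :
    HasFDerivAt (fun w : Hpt n => B.mulVec w.1 j) (dpc (B j)) z := by
  have h : (fun w : Hpt n => B.mulVec w.1 j) = ⇑(dpc (B j)) := by
    funext w; simp [Matrix.mulVec]
  rw [h]; exact (dpc (B j)).hasFDerivAt

lemma hasFD_quad (A : Matrix (Fin (2*n)) (Fin (2*n)) ℝ) (z : Hpt n) :
    HasFDerivAt (fun w : Hpt n => A.mulVec w.1 ⬝ᵥ w.1)
      (dpc (A.mulVec z.1 + Aᵀ.mulVec z.1)) z := by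
  have h : (fun w : Hpt n => A.mulVec w.1 ⬝ᵥ w.1)
      = fun w : Hpt n => ∑ i, (A.mulVec w.1 i) * w.1 i := by
    funext w; simp [dotProduct]
  rw [h]
  have h2 := HasFDerivAt.sum (fun i (_ : i ∈ Finset.univ) =>
    (hasFD_lin A i z).mul (hasFD_coord i z))
  have heq : (∑ i, ((A.mulVec z.1) i • ℓc i + z.1 i • dpc (A i)) : Hpt n →L[ℝ] ℝ)
      = dpc (A.mulVec z.1 + Aᵀ.mulVec z.1) := by
    refine ContinuousLinearMap.ext fun v => ?_
    simp only [dpc_apply, ContinuousLinearMap.sum_apply, ContinuousLinearMap.add_apply,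
      ContinuousLinearMap.smul_apply, ℓc_apply, smul_eq_mul, dotProduct,
      Pi.add_apply, Matrix.mulVec, Matrix.transpose_apply, add_mul, Finset.sum_mul,
      Finset.mul_sum, Finset.sum_add_distrib]
    congr 1
    rw [Finset.sum_comm]
    exact Finset.sum_congr rfl fun i _ => Finset.sum_congr rfl fun k _ => by ring
  rw [← heq]
  exact h2.congr_of_eventuallyEq (Filter.Eventually.of_forall fun w => by
    simp only [Finset.sum_apply, Pi.mul_apply])

lemma hasFD_phi (M : Matrix (Fin (2*n)) (Fin (2*n)) ℝ) (z : Hpt n) :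
    HasFDerivAt (phiM M)
      (((M⁻¹.mulVec z.1 ⬝ᵥ z.1) • dpc (M⁻¹.mulVec z.1 + (M⁻¹)ᵀ.mulVec z.1)
        + (M⁻¹.mulVec z.1 ⬝ᵥ z.1) • dpc (M⁻¹.mulVec z.1 + (M⁻¹)ᵀ.mulVec z.1))
        + (z.2 • τc + z.2 • τc)) z := by
  have h : phiM M = fun w : Hpt n =>
      (M⁻¹.mulVec w.1 ⬝ᵥ w.1) * (M⁻¹.mulVec w.1 ⬝ᵥ w.1) + w.2 * w.2 := by
    funext w; simp [phiM]; ring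
  rw [h]
  exact ((hasFD_quad M⁻¹ z).mul (hasFD_quad M⁻¹ z)).add ((hasFD_snd z).mul (hasFD_snd z))

lemma Xd_phi {M : Matrix (Fin (2*n)) (Fin (2*n)) ℝ} (hA : (M⁻¹)ᵀ = M⁻¹)
    (j : Fin (2*n)) (z : Hpt n) :
    Xd j (phiM M) z = 4 * (M⁻¹.mulVec z.1 ⬝ᵥ z.1) * M⁻¹.mulVec z.1 j
      + 4 * z.2 * (Jmat n).mulVec z.1 j := by
  rw [Xd, (hasFD_phi M z).fderiv]
  simp [Xvec, hA, dotProduct_single]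
  ring

/-- the first horizontal derivative as an explicit function -/
def gfun (M : Matrix (Fin (2*n)) (Fin (2*n)) ℝ) (j : Fin (2*n)) (z : Hpt n) : ℝ :=
  4 * (M⁻¹.mulVec z.1 ⬝ᵥ z.1) * M⁻¹.mulVec z.1 j + 4 * z.2 * (Jmat n).mulVec z.1 j

lemma Xd_gfun {M : Matrix (Fin (2*n)) (Fin (2*n)) ℝ} (hA : (M⁻¹)ᵀ = M⁻¹)
    (i j : Fin (2*n)) (z : Hpt n) :
    Xd i (gfun M j) z
      = 8 * M⁻¹.mulVec z.1 i * M⁻¹.mulVec z.1 j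
        + 4 * (M⁻¹.mulVec z.1 ⬝ᵥ z.1) * M⁻¹ j i
        + 8 * (Jmat n).mulVec z.1 i * (Jmat n).mulVec z.1 j
        + 4 * z.2 * Jmat n j i := by
  have h : HasFDerivAt (gfun M j)
      (((4 * (M⁻¹.mulVec z.1 ⬝ᵥ z.1)) • dpc (M⁻¹ j)
          + (M⁻¹.mulVec z.1 j) • ((4:ℝ) • dpc (M⁻¹.mulVec z.1 + (M⁻¹)ᵀ.mulVec z.1)))
        + ((4 * z.2) • dpc (Jmat n j)
          + ((Jmat n).mulVec z.1 j) • ((4:ℝ) • τc))) z := by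
    exact (((hasFD_quad M⁻¹ z).const_mul 4).mul (hasFD_lin M⁻¹ j z)).add
      (((hasFD_snd z).const_mul 4).mul (hasFD_lin (Jmat n) j z))
  rw [Xd, h.fderiv]
  simp [Xvec, hA, dotProduct_single]
  ring

end Stmt1Aux


namespace Stmt1Aux

lemma Jt (n : ℕ) : (Jmat n)ᵀ = -(Jmat n) := by
  ext i j
  have hi := i.isLt; have hj := j.isLt
  by_cases h1 : (i:ℕ) + n = (j:ℕ) <;> by_cases h2 : (j:ℕ) + n = (i:ℕ)
  · exfalso; omega
  · simp [Jmat, h1, h2]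
  · simp [Jmat, h1, h2]
  · simp [Jmat, h1, h2]

lemma quad_eq {n : ℕ} {A B : Matrix (Fin (2*n)) (Fin (2*n)) ℝ}
    (hA : Aᵀ = A) (hB : Bᵀ = B)
    (h : ∀ x, A.mulVec x ⬝ᵥ x = B.mulVec x ⬝ᵥ x) : A = B := by
  ext i j
  have h1 := h (Pi.single i 1 + Pi.single j 1)
  have h2 := h (Pi.single i 1)
  have h3 := h (Pi.single j 1)
  simp only [Matrix.mulVec_add, add_dotProduct, dotProduct_add,
    Matrix.mulVec_single, dotProduct_single, mul_one] at h1 h2 h3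
  have hAij : A j i = A i j := congrFun (congrFun hA i) j
  have hBij : B j i = B i j := congrFun (congrFun hB i) j
  simp only [Pi.add_apply] at h1
  simp only [Pi.smul_apply, MulOpposite.op_one, one_smul, Matrix.col,
    Matrix.transpose_apply] at h1 h2 h3
  linarith

end Stmt1Aux

/-- Lemma 3.2, converse part. If the identity
`((Q+2)/4)·⟨M ∇_H φ_M, ∇_H φ_M⟩ = φ_M · 𝓛_M φ_M` holds everywhere for a constant
symmetric positive definite matrix `M`, with `Q = 2n+2`, then `M` is symplectic. -/
theorem stmt1 (n : ℕ) (hn : 1 ≤ n) (Q : ℝ) (hQ : Q = 2 * n + 2)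
    (M : Matrix (Fin (2 * n)) (Fin (2 * n)) ℝ)
    (hsymm : M.IsSymm) (hpos : M.PosDef)
    (hid : ∀ z : Hpt n,
      (Q + 2) / 4 * (M.mulVec (gradH (phiM M) z) ⬝ᵥ gradH (phiM M) z) =
        phiM M z * Lop (fun _ => M) (phiM M) z) :
    IsSymplecticMat M := by
  classical
  open Stmt1Aux in
  subst hQ
  have hdet : IsUnit M.det := (Matrix.isUnit_iff_isUnit_det M).mp hpos.isUnit
  have hMM : M * M⁻¹ = 1 := Matrix.mul_nonsing_inv M hdet
  have hA : (M⁻¹)ᵀ = M⁻¹ := by rw [Matrix.transpose_nonsing_inv, hsymm.eq]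
  have hMx : ∀ x, M.mulVec (M⁻¹.mulVec x) = x := fun x => by
    rw [Matrix.mulVec_mulVec, hMM, Matrix.one_mulVec]
  have hMsym : ∀ a b, M.mulVec a ⬝ᵥ b = a ⬝ᵥ M.mulVec b := fun a b => by
    rw [Matrix.dotProduct_mulVec, ← Matrix.mulVec_transpose, hsymm.eq]
  have hxJ : ∀ x : Fin (2*n) → ℝ, x ⬝ᵥ (Jmat n).mulVec x = 0 := fun x => by
    have h1 : x ⬝ᵥ (Jmat n).mulVec x = (Jmat n)ᵀ.mulVec x ⬝ᵥ x := by
      rw [Matrix.dotProduct_mulVec, ← Matrix.mulVec_transpose]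
    rw [Jt n, Matrix.neg_mulVec, neg_dotProduct,
      dotProduct_comm] at h1
    rw [dotProduct_comm]
    linarith
  -- trace computations
  have t2 : ∑ i, ∑ j, M i j * M⁻¹ j i = (2*n : ℝ) := by
    have h1 : ∑ i, ∑ j, M i j * M⁻¹ j i = Matrix.trace (M * M⁻¹) := by
      simp [Matrix.trace, Matrix.diag, Matrix.mul_apply]
    rw [h1, hMM, Matrix.trace_one]
    simp
  have t4 : ∑ i, ∑ j, M i j * Jmat n j i = 0 := by
    have h1 : ∑ i, ∑ j, M i j * Jmat n j i = Matrix.trace (M * Jmat n) := by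
      simp [Matrix.trace, Matrix.diag, Matrix.mul_apply]
    have h2 : Matrix.trace (M * Jmat n) = - Matrix.trace (M * Jmat n) := by
      conv_lhs => rw [← Matrix.trace_transpose, Matrix.transpose_mul, Jt n, hsymm.eq,
        Matrix.neg_mul, Matrix.trace_neg, Matrix.trace_mul_comm]
    rw [h1]; linarith
  have key : ∀ x : Fin (2*n) → ℝ,
      M⁻¹.mulVec x ⬝ᵥ x = ((Jmat n).mulVec x) ⬝ᵥ M.mulVec ((Jmat n).mulVec x) := by
    intro x
    set a : Fin (2*n) → ℝ := M⁻¹.mulVec x with ha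
    set b : Fin (2*n) → ℝ := (Jmat n).mulVec x with hb
    set u : ℝ := a ⬝ᵥ x with hu
    set w : ℝ := b ⬝ᵥ M.mulVec b with hw
    have E : ∀ t : ℝ,
        (2 * (n:ℝ) + 2 + 2) / 4 * (16*u^2*u + 16*t^2*w)
          = (u^2 + t^2) * (8*u + 4*u*(2*(n:ℝ)) + 8*w) := by
      intro t
      have hgrad : gradH (phiM M) (x, t) = (4*u) • a + (4*t) • b := by
        funext j
        show Xd j (phiM M) (x, t) = _
        rw [Xd_phi hA]
        simp only [Pi.add_apply, Pi.smul_apply, smul_eq_mul]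
        rfl
      have hB : M.mulVec (gradH (phiM M) (x,t)) ⬝ᵥ gradH (phiM M) (x,t)
          = 16*u^2*u + 16*t^2*w := by
        rw [hgrad]
        simp only [Matrix.mulVec_add, Matrix.mulVec_smul, add_dotProduct,
          dotProduct_add, smul_dotProduct, dotProduct_smul,
          smul_eq_mul, hMx x]
        have c1 : x ⬝ᵥ a = u := by rw [hu, dotProduct_comm]
        have c2 : x ⬝ᵥ b = 0 := hxJ x
        have c3 : M.mulVec b ⬝ᵥ a = 0 := by
          rw [hMsym, ha, hMx x, dotProduct_comm]; exact hxJ x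
        have c4 : M.mulVec b ⬝ᵥ b = w := by rw [hw, dotProduct_comm]
        have c0 : M.mulVec a = x := hMx x
        rw [c0, c1, c2, c3, c4]
        ring
      have hXd : ∀ j, Xd j (phiM M) = gfun M j := fun j => funext fun z => Xd_phi hA j z
      have hC : Lop (fun _ => M) (phiM M) (x,t) = 8*u + 4*u*(2*(n:ℝ)) + 8*w := by
        rw [Lop]
        have hterm : ∀ i j, Xd i (Xd j (phiM M)) (x,t)
            = 8 * a i * a j + 4 * u * M⁻¹ j i + 8 * b i * b j + 4 * t * Jmat n j i := by
          intro i j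
          rw [hXd j, Xd_gfun hA]
        have h1 : ∑ i, ∑ j, (M i j * Xd i (Xd j (phiM M)) (x,t))
            = ∑ i, ∑ j, (8 * (M i j * (a i * a j)) + 4*u*(M i j * M⁻¹ j i)
              + 8 * (M i j * (b i * b j)) + 4*t*(M i j * Jmat n j i)) := by
          refine Finset.sum_congr rfl fun i _ => Finset.sum_congr rfl fun j _ => ?_
          rw [hterm i j]; ring
        rw [h1]
        simp only [Finset.sum_add_distrib, ← Finset.mul_sum]
        have q1 : ∑ i, ∑ j, M i j * (a i * a j) = u := by
          have : ∑ i, ∑ j, M i j * (a i * a j) = a ⬝ᵥ M.mulVec a := by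
            simp only [dotProduct, Matrix.mulVec, Finset.mul_sum]
            exact Finset.sum_congr rfl fun i _ => Finset.sum_congr rfl fun j _ => by ring
          rw [this, ha, hMx x, hu]
        have q3 : ∑ i, ∑ j, M i j * (b i * b j) = w := by
          have : ∑ i, ∑ j, M i j * (b i * b j) = b ⬝ᵥ M.mulVec b := by
            simp only [dotProduct, Matrix.mulVec, Finset.mul_sum]
            exact Finset.sum_congr rfl fun i _ => Finset.sum_congr rfl fun j _ => by ring
          rw [this, hw]
        rw [q1, q3, t2, t4]
        ring
      have hphi : phiM M (x,t) = u^2 + t^2 := by rw [phiM, hu, ha]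
      have := hid (x,t)
      rw [hB, hC, hphi] at this
      exact this
    have e0 := E 0
    have e1 := E 1
    have h0 : u^2*(u - w) = 0 := by linear_combination (1/8) * e0
    have h2 : (8*(n:ℝ)+8)*(w-u) = 0 := by linear_combination e1 - 8*h0
    have hn1 : (1:ℝ) ≤ (n:ℝ) := by exact_mod_cast hn
    have huw : u = w := by
      have : (8*(n:ℝ)+8) ≠ 0 := by linarith
      have := mul_eq_zero.mp h2
      rcases this with h | h
      · exact absurd h this
      · linarith
    rw [hu, hw] at huw
    rw [ha] at huw
    exact huw
  -- conclude matrix equality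
  have hBsym : ((Jmat n)ᵀ * M * Jmat n)ᵀ = (Jmat n)ᵀ * M * Jmat n := by
    rw [Matrix.transpose_mul, Matrix.transpose_mul, Matrix.transpose_transpose, hsymm.eq,
      Matrix.mul_assoc]
  refine quad_eq hA hBsym fun x => ?_
  rw [key x]
  have hr : ((Jmat n)ᵀ * M * Jmat n).mulVec x
      = (Jmat n)ᵀ.mulVec (M.mulVec ((Jmat n).mulVec x)) := by
    rw [Matrix.mulVec_mulVec, Matrix.mulVec_mulVec]
  rw [hr, Matrix.mulVec_transpose, ← Matrix.dotProduct_mulVec, dotProduct_comm]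

end
end
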